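/- With F^s and F^{s,j}_{Q_k} as above, fix a cube Q_l ∈ F^s and an integer j ≥ 0. Then the number of cubes Q_k ∈ F^{s₀} such that Q_l ∈ F^{s,j}_{Q_k} is at most C·2^{j(n−1)}, where C depends only on n and K. -/

import Mathlib

open Set Metric MeasureTheory

def cube (n : ℕ) (c : EuclideanSpace ℝ (Fin n)) (r : ℝ) : Set (EuclideanSpace ℝ (Fin n)) :=
  {x | ∀ i, |x i - c i| ≤ r}

noncomputable def sDist {α : Type*} [PseudoMetricSpace α] (s t : Set α) : ℝ :=
  sInf {d : ℝ | ∃ x ∈ s, ∃ y ∈ t, d = dist x y}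

def IsWhitneyOf (n : ℕ) (Ω : Set (EuclideanSpace ℝ (Fin n)))
    (c : ℕ → EuclideanSpace ℝ (Fin n)) (r : ℕ → ℝ) : Prop :=
  (∀ k, 0 < r k) ∧
  Ω = ⋃ k, cube n (c k) (r k) ∧
  (∀ k l, k ≠ l → interior (cube n (c k) (r k)) ∩ interior (cube n (c l) (r l)) = ∅) ∧
  (∀ k, Metric.diam (cube n (c k) (r k)) ≤ sDist (cube n (c k) (r k)) (frontier Ω) ∧
    sDist (cube n (c k) (r k)) (frontier Ω) ≤ 4 * Metric.diam (cube n (c k) (r k)))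

def IsLipGraphDomain (d : ℕ) (K : ℝ) (Ω : Set (EuclideanSpace ℝ (Fin (d + 1))))
    (φ : EuclideanSpace ℝ (Fin d) → ℝ) : Prop :=
  (∀ x' ∈ ball (0 : EuclideanSpace ℝ (Fin d)) 1, |φ x'| ≤ K) ∧
  (∀ x' ∈ ball (0 : EuclideanSpace ℝ (Fin d)) 1, ∀ y' ∈ ball (0 : EuclideanSpace ℝ (Fin d)) 1,
    |φ x' - φ y'| ≤ K * dist x' y') ∧
  Ω ∩ ball 0 1 =
    {x : EuclideanSpace ℝ (Fin (d + 1)) | φ (WithLp.toLp 2 (fun i : Fin d => x i.castSucc)) < x (Fin.last d)} ∩ ball 0 1 ∧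
  frontier Ω ∩ ball 0 1 =
    {x : EuclideanSpace ℝ (Fin (d + 1)) | x (Fin.last d) = φ (WithLp.toLp 2 (fun i : Fin d => x i.castSucc))} ∩ ball 0 1

/-- Membership of the `k`-th Whitney cube in the family `F^s`:
`2^{-s-1} < d_k ≤ 2^{-s}` and `Q̃_k ⊆ Ω ∩ B_{1/4}`. -/
def memF (d : ℕ) (Ω : Set (EuclideanSpace ℝ (Fin (d + 1))))
    (c : ℕ → EuclideanSpace ℝ (Fin (d + 1))) (r : ℕ → ℝ) (s : ℤ) (k : ℕ) : Prop :=
  (2 : ℝ) ^ (-s - 1) < Metric.diam (cube (d + 1) (c k) (r k)) ∧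
  Metric.diam (cube (d + 1) (c k) (r k)) ≤ (2 : ℝ) ^ (-s) ∧
  cube (d + 1) (c k) (6 / 5 * r k) ⊆ Ω ∩ ball 0 (1 / 4)

/-- Membership of the `l`-th Whitney cube in the family `F^{s,j}_{Q_k}`, for a fixed
reference cube `Q_k ∈ F^{s₀}`: `Q_l ∈ F^s` with `dist(Q_l, Q_k) ≤ 2^{-s₀+5}` when `j = 0`,
and `2^{-s₀+j+4} < dist(Q_l, Q_k) ≤ 2^{-s₀+j+5}` when `j ≥ 1`. -/
def memFsj (d : ℕ) (Ω : Set (EuclideanSpace ℝ (Fin (d + 1))))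
    (c : ℕ → EuclideanSpace ℝ (Fin (d + 1))) (r : ℕ → ℝ)
    (s₀ : ℤ) (k : ℕ) (s : ℤ) (j : ℕ) (l : ℕ) : Prop :=
  memF d Ω c r s l ∧
    (if j = 0 then
      sDist (cube (d + 1) (c l) (r l)) (cube (d + 1) (c k) (r k)) ≤ (2 : ℝ) ^ (-s₀ + 5)
    else
      (2 : ℝ) ^ (-s₀ + (j : ℤ) + 4) <
          sDist (cube (d + 1) (c l) (r l)) (cube (d + 1) (c k) (r k)) ∧
        sDist (cube (d + 1) (c l) (r l)) (cube (d + 1) (c k) (r k)) ≤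
          (2 : ℝ) ^ (-s₀ + (j : ℤ) + 5))

def obox (n : ℕ) (c : EuclideanSpace ℝ (Fin n)) (r : ℝ) : Set (EuclideanSpace ℝ (Fin n)) :=
  {x | ∀ i, |x i - c i| < r}

variable {n : ℕ}

lemma coord_dist_le (x y : EuclideanSpace ℝ (Fin n)) (i : Fin n) : |x i - y i| ≤ dist x y := by
  rw [EuclideanSpace.dist_eq, ← Real.sqrt_sq (abs_nonneg (x i - y i))]
  apply Real.sqrt_le_sqrt
  rw [sq_abs]
  have := Finset.single_le_sum (f := fun j => dist (x j) (y j) ^ 2)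
    (fun j _ => sq_nonneg _) (Finset.mem_univ i)
  simpa [Real.dist_eq] using this

lemma euclid_dist_le {x y : EuclideanSpace ℝ (Fin n)} {t : ℝ} (ht : 0 ≤ t)
    (h : ∀ i, |x i - y i| ≤ t) : dist x y ≤ n * t := by
  rw [EuclideanSpace.dist_eq]
  have h1 : ∑ i : Fin n, dist (x i) (y i) ^ 2 ≤ ∑ _i : Fin n, t ^ 2 := by
    apply Finset.sum_le_sum
    intro i _
    rw [Real.dist_eq]
    exact sq_le_sq' (by linarith [abs_nonneg (x i - y i), h i]) (h i)
  calc √(∑ i : Fin n, dist (x i) (y i) ^ 2) ≤ √(∑ _i : Fin n, t ^ 2) := Real.sqrt_le_sqrt h1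
    _ = √((n : ℝ) * t ^ 2) := by rw [Finset.sum_const]; norm_num [mul_comm]
    _ ≤ √(((n : ℝ) * t) ^ 2) := by
        apply Real.sqrt_le_sqrt
        rw [mul_pow]
        have hn : (n : ℝ) ≤ (n : ℝ) ^ 2 := by
          exact_mod_cast Nat.le_self_pow two_ne_zero n
        nlinarith [sq_nonneg t]
    _ = (n : ℝ) * t := Real.sqrt_sq (by positivity)

lemma mem_cube_self (c : EuclideanSpace ℝ (Fin n)) {r : ℝ} (hr : 0 ≤ r) : c ∈ cube n c r := by
  intro i; simpa using hr

lemma cube_mono (c : EuclideanSpace ℝ (Fin n)) {r r' : ℝ} (h : r ≤ r') :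
    cube n c r ⊆ cube n c r' := fun x hx i => (hx i).trans h

lemma obox_subset_cube (c : EuclideanSpace ℝ (Fin n)) (r : ℝ) :
    obox n c r ⊆ cube n c r := fun x hx i => (hx i).le

lemma isBounded_cube (c : EuclideanSpace ℝ (Fin n)) {r : ℝ} (hr : 0 ≤ r) :
    Bornology.IsBounded (cube n c r) := by
  apply (isBounded_closedBall (x := c) (r := n * r)).subset
  intro x hx
  exact mem_closedBall.2 (euclid_dist_le hr hx)

lemma diam_cube_le (c : EuclideanSpace ℝ (Fin n)) {r : ℝ} (hr : 0 ≤ r) :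
    Metric.diam (cube n c r) ≤ 2 * n * r := by
  apply Metric.diam_le_of_forall_dist_le (by positivity)
  intro x hx y hy
  have hb : ∀ i, |x i - y i| ≤ 2 * r := by
    intro i
    have h1 := abs_sub_le (x i) (c i) (y i)
    have h2 : |c i - y i| = |y i - c i| := abs_sub_comm _ _
    have := hx i; have := hy i
    linarith
  calc dist x y ≤ n * (2 * r) := euclid_dist_le (by positivity) hb
    _ = 2 * n * r := by ring

lemma le_diam_cube (c : EuclideanSpace ℝ (Fin (n + 1))) {r : ℝ} (hr : 0 < r) :
    2 * r ≤ Metric.diam (cube (n + 1) c r) := by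
  set p : EuclideanSpace ℝ (Fin (n + 1)) := WithLp.toLp 2 (fun j => if j = 0 then c j + r else c j) with hp
  set q : EuclideanSpace ℝ (Fin (n + 1)) := WithLp.toLp 2 (fun j => if j = 0 then c j - r else c j) with hq
  have hpc : p ∈ cube (n + 1) c r := by
    intro i; simp only [hp, PiLp.toLp_apply]
    split <;> simp [hr.le, abs_of_nonneg hr.le]
  have hqc : q ∈ cube (n + 1) c r := by
    intro i; simp only [hq, PiLp.toLp_apply]
    split <;> simp [hr.le, abs_of_nonneg hr.le, abs_of_nonpos (neg_nonpos.mpr hr.le)]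
  have hd : dist p q = 2 * r := by
    rw [EuclideanSpace.dist_eq]
    have : ∀ j : Fin (n+1), dist (p j) (q j) ^ 2 = if j = 0 then (2*r)^2 else 0 := by
      intro j
      simp only [hp, hq, PiLp.toLp_apply, Real.dist_eq]
      split <;> [skip; simp]
      rw [show c j + r - (c j - r) = 2*r by ring, abs_of_nonneg (by linarith), ]
    rw [Finset.sum_congr rfl (fun j _ => this j)]
    rw [Finset.sum_ite_eq' Finset.univ (0 : Fin (n+1)) (fun _ => (2*r)^2)]
    simp [Real.sqrt_sq (by linarith : (0:ℝ) ≤ 2*r)]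
  calc 2 * r = dist p q := hd.symm
    _ ≤ _ := Metric.dist_le_diam_of_mem (isBounded_cube c hr.le) hpc hqc

variable {n : ℕ}

lemma isOpen_obox (c : EuclideanSpace ℝ (Fin n)) (r : ℝ) : IsOpen (obox n c r) := by
  have : obox n c r = ⋂ i, (⇑(EuclideanSpace.proj (𝕜 := ℝ) i)) ⁻¹' (Metric.ball (c i) r) := by
    ext x
    simp [obox, Real.dist_eq, EuclideanSpace.proj]
  rw [this]
  exact isOpen_iInter_of_finite fun i =>
    ((EuclideanSpace.proj i).continuous).isOpen_preimage _ isOpen_ball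

lemma measurableEquiv_apply (x : EuclideanSpace ℝ (Fin n)) (i : Fin n) :
    (MeasurableEquiv.toLp 2 (Fin n → ℝ)).symm x i = x i := rfl

lemma obox_eq_preimage (c : EuclideanSpace ℝ (Fin n)) (r : ℝ) :
    obox n c r = (MeasurableEquiv.toLp 2 (Fin n → ℝ)).symm ⁻¹'
      (Set.pi univ fun i => Ioo (c i - r) (c i + r)) := by
  ext x
  simp only [obox, mem_setOf_eq, mem_preimage, Set.mem_pi, mem_univ, forall_true_left, mem_Ioo,
    measurableEquiv_apply]
  refine forall_congr' fun i => ?_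
  rw [abs_lt]
  constructor
  · rintro ⟨h1, h2⟩; constructor <;> [linarith; linarith]
  · rintro ⟨h1, h2⟩; constructor <;> [linarith; linarith]

lemma cube_eq_preimage (c : EuclideanSpace ℝ (Fin n)) (r : ℝ) :
    cube n c r = (MeasurableEquiv.toLp 2 (Fin n → ℝ)).symm ⁻¹'
      (Set.pi univ fun i => Icc (c i - r) (c i + r)) := by
  ext x
  simp only [cube, mem_setOf_eq, mem_preimage, Set.mem_pi, mem_univ, forall_true_left, mem_Icc,
    measurableEquiv_apply]
  refine forall_congr' fun i => ?_
  rw [abs_le]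
  constructor
  · rintro ⟨h1, h2⟩; constructor <;> [linarith; linarith]
  · rintro ⟨h1, h2⟩; constructor <;> [linarith; linarith]

lemma volume_obox (c : EuclideanSpace ℝ (Fin n)) {r : ℝ} (hr : 0 ≤ r) :
    volume (obox n c r) = ENNReal.ofReal ((2 * r) ^ n) := by
  rw [obox_eq_preimage]
  rw [(EuclideanSpace.volume_preserving_symm_measurableEquiv_toLp (Fin n)).measure_preimage
    ((MeasurableSet.univ_pi fun i => measurableSet_Ioo).nullMeasurableSet)]
  rw [volume_pi_pi]
  simp only [Real.volume_Ioo]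
  have he : ∀ i : Fin n, ENNReal.ofReal (c i + r - (c i - r)) = ENNReal.ofReal (2 * r) := by
    intro i; ring_nf
  rw [Finset.prod_congr rfl (fun i _ => he i), Finset.prod_const, Finset.card_univ,
    Fintype.card_fin, ← ENNReal.ofReal_pow (by positivity)]

lemma volume_cube (c : EuclideanSpace ℝ (Fin n)) {r : ℝ} (hr : 0 ≤ r) :
    volume (cube n c r) = ENNReal.ofReal ((2 * r) ^ n) := by
  rw [cube_eq_preimage]
  rw [(EuclideanSpace.volume_preserving_symm_measurableEquiv_toLp (Fin n)).measure_preimage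
    ((MeasurableSet.univ_pi fun i => measurableSet_Icc).nullMeasurableSet)]
  rw [volume_pi_pi]
  simp only [Real.volume_Icc]
  have he : ∀ i : Fin n, ENNReal.ofReal (c i + r - (c i - r)) = ENNReal.ofReal (2 * r) := by
    intro i; ring_nf
  rw [Finset.prod_congr rfl (fun i _ => he i), Finset.prod_const, Finset.card_univ,
    Fintype.card_fin, ← ENNReal.ofReal_pow (by positivity)]

lemma measurableSet_cube (c : EuclideanSpace ℝ (Fin n)) (r : ℝ) :
    MeasurableSet (cube n c r) := by
  rw [cube_eq_preimage]
  exact (MeasurableEquiv.toLp 2 (Fin n → ℝ)).symm.measurable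
    (MeasurableSet.univ_pi fun i => measurableSet_Icc)

lemma obox_subset_interior_cube (c : EuclideanSpace ℝ (Fin n)) (r : ℝ) :
    obox n c r ⊆ interior (cube n c r) :=
  interior_maximal (fun x hx i => (hx i).le) (isOpen_obox c r)

variable {α : Type*} [PseudoMetricSpace α] {s t : Set α}

lemma sDist_bddBelow : BddBelow {d : ℝ | ∃ x ∈ s, ∃ y ∈ t, d = dist x y} :=
  ⟨0, by rintro e ⟨x, -, y, -, rfl⟩; exact dist_nonneg⟩

lemma sDist_le_dist {x y : α} (hx : x ∈ s) (hy : y ∈ t) : sDist s t ≤ dist x y :=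
  csInf_le sDist_bddBelow ⟨x, hx, y, hy, rfl⟩

lemma exists_dist_lt_of_sDist_lt (hs : s.Nonempty) (ht : t.Nonempty) {M : ℝ}
    (h : sDist s t < M) : ∃ x ∈ s, ∃ y ∈ t, dist x y < M := by
  obtain ⟨xs, hxs⟩ := hs; obtain ⟨yt, hyt⟩ := ht
  have hne : {d : ℝ | ∃ x ∈ s, ∃ y ∈ t, d = dist x y}.Nonempty := ⟨_, xs, hxs, yt, hyt, rfl⟩
  obtain ⟨e, ⟨x, hx, y, hy, rfl⟩, he⟩ := (csInf_lt_iff sDist_bddBelow hne).mp h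
  exact ⟨x, hx, y, hy, he⟩

lemma le_sDist (hs : s.Nonempty) (ht : t.Nonempty) {m : ℝ}
    (h : ∀ x ∈ s, ∀ y ∈ t, m ≤ dist x y) : m ≤ sDist s t := by
  obtain ⟨xs, hxs⟩ := hs; obtain ⟨yt, hyt⟩ := ht
  exact le_csInf ⟨_, xs, hxs, yt, hyt, rfl⟩ (by rintro e ⟨x, hx, y, hy, rfl⟩; exact h x hx y hy)

lemma grid_1d {aa R : ℝ} (hR : 0 < R) {N : ℕ} (hN : 0 < N) {t : ℝ}
    (h : |t - aa| ≤ R) :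
    ∃ u : Fin N, |t - (aa - R + (2 * (u : ℕ) + 1) * (R / N))| ≤ R / N := by
  have hNR : (0:ℝ) < N := by exact_mod_cast hN
  set w : ℝ := (t - (aa - R)) * N / (2 * R) with hw
  have habs := abs_le.mp h
  have hw0 : 0 ≤ w := by
    apply div_nonneg _ (by linarith)
    nlinarith
  have hwN : w ≤ N := by
    rw [hw, div_le_iff₀ (by linarith)]
    nlinarith
  have key : ∃ u : Fin N, |w - ((u : ℕ) + 1/2)| ≤ 1/2 := by
    rcases le_or_gt (⌊w⌋₊) (N - 1) with h1 | h1
    · have hlt : ⌊w⌋₊ < N := by omega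
      refine ⟨⟨⌊w⌋₊, hlt⟩, ?_⟩
      have h2 : (⌊w⌋₊ : ℝ) ≤ w := Nat.floor_le hw0
      have h3 : w < ⌊w⌋₊ + 1 := Nat.lt_floor_add_one w
      rw [abs_le]
      constructor <;> simp only [] <;> push_cast <;> linarith
    · have hge : N ≤ ⌊w⌋₊ := by omega
      have h2 : (N : ℝ) ≤ w := le_trans (by exact_mod_cast hge) (Nat.floor_le hw0)
      have hwEq : w = N := le_antisymm hwN h2
      refine ⟨⟨N - 1, by omega⟩, ?_⟩
      have : ((N - 1 : ℕ) : ℝ) = (N : ℝ) - 1 := by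
        have : (1:ℕ) ≤ N := hN
        push_cast [Nat.cast_sub this]
        ring
      rw [abs_le]
      constructor <;> simp only [this, hwEq] <;> linarith
  obtain ⟨u, hu⟩ := key
  refine ⟨u, ?_⟩
  have ht : t = (aa - R) + w * (2 * R / N) := by
    rw [hw]; field_simp; ring
  have hexp : t - (aa - R + (2 * (u:ℕ) + 1) * (R / N)) = (w - ((u:ℕ) + 1/2)) * (2 * R / N) := by
    rw [ht]; field_simp; ring
  rw [hexp, abs_mul]
  have h2RN : |2 * R / N| = 2 * R / N := abs_of_nonneg (by positivity)
  rw [h2RN]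
  calc |w - ((u:ℕ) + 1/2)| * (2 * R / N) ≤ (1/2) * (2 * R / N) := by
        apply mul_le_mul_of_nonneg_right hu (by positivity)
    _ = R / N := by ring

lemma mem_frontier_inter_open {X : Type*} [TopologicalSpace X] {Ω U : Set X} {x : X}
    (hx : x ∈ frontier Ω) (hxU : x ∈ U) (hU : IsOpen U) : x ∈ frontier (Ω ∩ U) := by
  constructor
  · have : x ∈ U ∩ closure Ω := ⟨hxU, hx.1⟩
    have h2 := hU.inter_closure this
    rwa [inter_comm] at h2
  · intro hint
    exact hx.2 (interior_mono inter_subset_left hint)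

lemma mem_frontier_of_frontier_inter_open {X : Type*} [TopologicalSpace X] {Ω U : Set X} {x : X}
    (hx : x ∈ frontier (Ω ∩ U)) (hxU : x ∈ U) (hU : IsOpen U) : x ∈ frontier Ω := by
  constructor
  · exact closure_mono inter_subset_left hx.1
  · intro hint
    exact hx.2 (by rw [interior_inter, hU.interior_eq]; exact ⟨hint, hxU⟩)

def eproj {d : ℕ} (x : EuclideanSpace ℝ (Fin (d+1))) : EuclideanSpace ℝ (Fin d) :=
  WithLp.toLp 2 (fun i : Fin d => x i.castSucc)

lemma proj_dist_le {d : ℕ} (x y : EuclideanSpace ℝ (Fin (d+1))) :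
    dist (eproj x) (eproj y) ≤ dist x y := by
  rw [EuclideanSpace.dist_eq (x := eproj x), EuclideanSpace.dist_eq]
  show √(∑ i : Fin d, dist (x i.castSucc) (y i.castSucc) ^ 2) ≤ _
  apply Real.sqrt_le_sqrt
  rw [Fin.sum_univ_castSucc (f := fun i => dist (x i) (y i) ^ 2)]
  have h0 : (0:ℝ) ≤ dist (x (Fin.last d)) (y (Fin.last d)) ^ 2 := sq_nonneg _
  linarith

lemma proj_norm_le {d : ℕ} (x : EuclideanSpace ℝ (Fin (d+1))) :
    ‖eproj x‖ ≤ ‖x‖ := by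
  have h := proj_dist_le x 0
  have h0 : eproj (0 : EuclideanSpace ℝ (Fin (d+1))) = 0 := rfl
  rw [h0, dist_zero_right, dist_zero_right] at h
  exact h


lemma count_by_volume {n : ℕ} (A : Set ℕ) (c : ℕ → EuclideanSpace ℝ (Fin n)) (r : ℕ → ℝ)
    {a : ℝ} (ha : 0 < a) (hra : ∀ k ∈ A, a ≤ r k)
    (hdisj : ∀ k ∈ A, ∀ k' ∈ A, k ≠ k' →
      obox n (c k) (r k) ∩ obox n (c k') (r k') = ∅)
    {S : Set (EuclideanSpace ℝ (Fin n))} (hS : ∀ k ∈ A, obox n (c k) (r k) ⊆ S)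
    {V : ℝ} (hV : 0 ≤ V) (hvol : volume S ≤ ENNReal.ofReal V) :
    A.Finite ∧ (A.ncard : ℝ) ≤ V / (2 * a) ^ n := by
  have hpow : (0 : ℝ) < (2 * a) ^ n := by positivity
  have key : ∀ T : Finset ℕ, ↑T ⊆ A → (T.card : ℝ) ≤ V / (2 * a) ^ n := by
    intro T hT
    rw [le_div_iff₀ hpow]
    have hmeas : ∀ k ∈ T, MeasurableSet (obox n (c k) (r k)) :=
      fun k _ => (isOpen_obox _ _).measurableSet
    have hpd : (↑T : Set ℕ).PairwiseDisjoint (fun k => obox n (c k) (r k)) := by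
      intro k hk k' hk' hne
      rw [Function.onFun, Set.disjoint_iff_inter_eq_empty]
      exact hdisj k (hT hk) k' (hT hk') hne
    have h1 : ∑ k ∈ T, volume (obox n (c k) (r k)) ≤ ENNReal.ofReal V := by
      rw [← measure_biUnion_finset hpd hmeas]
      refine le_trans (measure_mono ?_) hvol
      exact Set.iUnion₂_subset fun k hk => hS k (hT hk)
    have h2 : (T.card : ENNReal) * ENNReal.ofReal ((2 * a) ^ n) ≤ ENNReal.ofReal V := by
      refine le_trans ?_ h1
      calc (T.card : ENNReal) * ENNReal.ofReal ((2 * a) ^ n)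
          = ∑ _k ∈ T, ENNReal.ofReal ((2 * a) ^ n) := by rw [Finset.sum_const, nsmul_eq_mul]
        _ ≤ ∑ k ∈ T, volume (obox n (c k) (r k)) := by
            refine Finset.sum_le_sum fun k hk => ?_
            have hak := hra k (hT hk)
            rw [volume_obox _ (le_trans ha.le hak)]
            exact ENNReal.ofReal_le_ofReal
              (pow_le_pow_left₀ (by positivity) (by linarith) n)
    have h3 : ENNReal.ofReal ((T.card : ℝ) * (2 * a) ^ n) ≤ ENNReal.ofReal V := by
      rw [ENNReal.ofReal_mul (by positivity), ENNReal.ofReal_natCast]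
      exact h2
    exact (ENNReal.ofReal_le_ofReal_iff hV).mp h3
  have hfin : A.Finite := by
    by_contra hinf
    have hinf' : A.Infinite := hinf
    obtain ⟨T, hT, hcard⟩ := hinf'.exists_subset_card_eq (⌊V / (2 * a) ^ n⌋₊ + 1)
    have hk := key T hT
    rw [hcard] at hk
    have h2 := Nat.lt_floor_add_one (V / (2 * a) ^ n)
    push_cast at hk
    linarith
  refine ⟨hfin, ?_⟩
  rw [Set.ncard_eq_toFinset_card A hfin]
  exact key hfin.toFinset (by simp)

set_option maxHeartbeats 2000000 in
/-- Lemma 2.7: for a fixed cube `Q_l ∈ F^s` and `j ≥ 0`, there are at most `C 2^{j(n-1)}`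
cubes `Q_k ∈ F^{s₀}` such that `Q_l ∈ F^{s,j}_{Q_k}`, with `C = C(n, K)`. -/
theorem count_reference_cubes (d : ℕ) (K : ℝ) (hK : 0 ≤ K) :
    ∃ C : ℝ, 0 < C ∧
      ∀ (Ω : Set (EuclideanSpace ℝ (Fin (d + 1)))) (φ : EuclideanSpace ℝ (Fin d) → ℝ)
        (c : ℕ → EuclideanSpace ℝ (Fin (d + 1))) (r : ℕ → ℝ),
        IsLipGraphDomain d K Ω φ → φ 0 = 0 →
        (0 : EuclideanSpace ℝ (Fin (d + 1))) ∈ frontier Ω →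
        IsWhitneyOf (d + 1) (Ω ∩ ball 0 1) c r →
        ∀ (s₀ : ℤ), 2 ≤ s₀ → ∀ (s : ℤ), 2 ≤ s → ∀ (j : ℕ) (l : ℕ), memF d Ω c r s l →
          {k : ℕ | memF d Ω c r s₀ k ∧ memFsj d Ω c r s₀ k s j l}.Finite ∧
          ({k : ℕ | memF d Ω c r s₀ k ∧ memFsj d Ω c r s₀ k s j l}.ncard : ℝ) ≤
            C * (2 : ℝ) ^ ((j : ℤ) * d) := by
  classical
  refine ⟨((2:ℝ)^20 * ((d:ℝ)+1)^2 * (1+K))^(2*(d+1)), by positivity, ?_⟩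
  intro Ω φ c r hLip hφ0 h0fr hW s₀ hs₀ s hs j l hl
  have hd1 : (1:ℝ) ≤ (d:ℝ)+1 := by
    have : (0:ℝ) ≤ (d:ℝ) := Nat.cast_nonneg d
    linarith
  set A := {k : ℕ | memF d Ω c r s₀ k ∧ memFsj d Ω c r s₀ k s j l} with hAdef
  have hpow2 : (2:ℝ)^((j:ℤ) * d) = ((2:ℝ)^j)^d := by
    rw [zpow_mul, zpow_natCast, zpow_natCast]
  have hJ1 : (1:ℝ) ≤ (2:ℝ)^j := one_le_pow₀ one_le_two
  rcases A.eq_empty_or_nonempty with hAe | ⟨k₁, hk₁⟩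
  · refine ⟨hAe ▸ Set.finite_empty, ?_⟩
    rw [hAe, Set.ncard_empty]
    push_cast
    positivity
  obtain ⟨hrpos, hΩeq, hdisjW, hWhit⟩ := hW
  obtain ⟨δ, hδdef⟩ : ∃ δ : ℝ, δ = (2:ℝ)^(-s₀) := ⟨_, rfl⟩
  obtain ⟨J, hJdef⟩ : ∃ J : ℝ, J = (2:ℝ)^j := ⟨_, rfl⟩
  have hδpos : (0:ℝ) < δ := hδdef ▸ zpow_pos two_pos _
  have hJ1' : (1:ℝ) ≤ J := hJdef ▸ hJ1
  have hJpos : (0:ℝ) < J := by linarith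
  have hδ4 : δ ≤ 1/4 := by
    rw [hδdef]
    have h := zpow_le_zpow_right₀ (one_le_two (α := ℝ)) (by omega : -s₀ ≤ (-2:ℤ))
    norm_num at h ⊢
    convert h using 1
  have hzp : ∀ m : ℤ, (2:ℝ)^(-s₀ + m) = (2:ℝ)^m * δ := by
    intro m
    rw [hδdef, zpow_add₀ (two_ne_zero : (2:ℝ) ≠ 0), mul_comm]
  have hfrne : (frontier (Ω ∩ ball 0 1)).Nonempty :=
    ⟨0, mem_frontier_inter_open h0fr (mem_ball_self one_pos) isOpen_ball⟩
  -- facts about any cube in F^{s₀}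
  have hkfacts : ∀ k, memF d Ω c r s₀ k →
      δ/(4*((d:ℝ)+1)) ≤ r k ∧ r k ≤ δ/2 ∧
      cube (d+1) (c k) (r k) ⊆ Ω ∩ ball 0 (1/4) ∧
      Metric.diam (cube (d+1) (c k) (r k)) ≤ δ ∧
      ∃ y ∈ frontier (Ω ∩ ball 0 1), dist (c k) y ≤ 6*δ := by
    intro k hk
    obtain ⟨hk1, hk2, hk3⟩ := hk
    rw [← hδdef] at hk2
    have e1 : (2:ℝ)^(-s₀-1) = δ/2 := by
      rw [show -s₀-1 = -s₀ + (-1) by ring, hzp]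
      norm_num
      ring
    rw [e1] at hk1
    have h2r : 2 * r k ≤ δ := le_trans (le_diam_cube (c k) (hrpos k)) hk2
    have hrub : r k ≤ δ/2 := by linarith
    have hdiamub := diam_cube_le (c k) (hrpos k).le
    have hcast : ((d+1 : ℕ):ℝ) = (d:ℝ)+1 := by push_cast; ring
    rw [hcast] at hdiamub
    have hrlb : δ/(4*((d:ℝ)+1)) ≤ r k := by
      rw [div_le_iff₀ (by positivity)]
      nlinarith
    have hsub : cube (d+1) (c k) (r k) ⊆ Ω ∩ ball 0 (1/4) :=
      (cube_mono (c k) (by linarith [hrpos k] : r k ≤ 6/5 * r k)).trans hk3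
    have hQne : (cube (d+1) (c k) (r k)).Nonempty := ⟨c k, mem_cube_self _ (hrpos k).le⟩
    have hsdlt : sDist (cube (d+1) (c k) (r k)) (frontier (Ω ∩ ball 0 1)) < 5*δ := by
      have h4 := (hWhit k).2
      linarith
    obtain ⟨x, hx, y, hy, hxy⟩ := exists_dist_lt_of_sDist_lt hQne hfrne hsdlt
    refine ⟨hrlb, hrub, hsub, hk2, y, hy, ?_⟩
    have h1 : dist (c k) x ≤ Metric.diam (cube (d+1) (c k) (r k)) :=
      dist_le_diam_of_mem (isBounded_cube _ (hrpos k).le) (mem_cube_self _ (hrpos k).le) hx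
    calc dist (c k) y ≤ dist (c k) x + dist x y := dist_triangle _ _ _
      _ ≤ 6*δ := by linarith
  -- facts about Q_l
  obtain ⟨hl1, hl2, hl3⟩ := hl
  have hQl_sub : cube (d+1) (c l) (r l) ⊆ Ω ∩ ball 0 (1/4) :=
    (cube_mono (c l) (by linarith [hrpos l] : r l ≤ 6/5 * r l)).trans hl3
  have hQl_ne : (cube (d+1) (c l) (r l)).Nonempty := ⟨c l, mem_cube_self _ (hrpos l).le⟩
  have hcl4 : ‖c l‖ < 1/4 :=
    mem_ball_zero_iff.mp (hQl_sub (mem_cube_self _ (hrpos l).le)).2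
  have hWl := (hWhit l).1
  -- uniform upper bound on sDist(Q_l, Q_k) for k ∈ A
  have hsd32 : ∀ k ∈ A, sDist (cube (d+1) (c l) (r l)) (cube (d+1) (c k) (r k)) ≤ 32*J*δ := by
    intro k hk
    have hif := hk.2.2
    split_ifs at hif with hj0
    · have e : (2:ℝ)^(-s₀+5) = 32*δ := by rw [hzp 5]; norm_num
      rw [e] at hif
      nlinarith
    · have e : (2:ℝ)^(-s₀+(j:ℤ)+5) = 32*J*δ := by
        rw [show -s₀+(j:ℤ)+5 = -s₀ + ((j:ℤ)+5) by ring, hzp,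
          zpow_add₀ (two_ne_zero : (2:ℝ) ≠ 0), zpow_natCast, ← hJdef,
          show ((2:ℝ)^(5:ℤ)) = 32 by norm_num]
        ring
      rw [e] at hif
      exact hif.2
  -- bound on the size of Q_l
  obtain ⟨y₁, hy₁fr, hy₁d⟩ := (hkfacts k₁ hk₁.1).2.2.2.2
  have hQk₁ne : (cube (d+1) (c k₁) (r k₁)).Nonempty := ⟨c k₁, mem_cube_self _ (hrpos k₁).le⟩
  have hdiamk₁ := (hkfacts k₁ hk₁.1).2.2.2.1
  have hsb : (2:ℝ)^(-s) ≤ 128*J*δ := by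
    have low : (2:ℝ)^(-s-1) - 7*δ ≤
        sDist (cube (d+1) (c l) (r l)) (cube (d+1) (c k₁) (r k₁)) := by
      apply le_sDist hQl_ne hQk₁ne
      intro x hx y hy
      have h1 : dist y y₁ ≤ 7*δ := by
        have ha : dist y (c k₁) ≤ Metric.diam (cube (d+1) (c k₁) (r k₁)) :=
          dist_le_diam_of_mem (isBounded_cube _ (hrpos k₁).le) hy (mem_cube_self _ (hrpos k₁).le)
        calc dist y y₁ ≤ dist y (c k₁) + dist (c k₁) y₁ := dist_triangle _ _ _
          _ ≤ 7*δ := by linarith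
      have h2 : sDist (cube (d+1) (c l) (r l)) (frontier (Ω ∩ ball 0 1)) ≤ dist x y₁ :=
        sDist_le_dist hx hy₁fr
      have h3 : dist x y₁ ≤ dist x y + dist y y₁ := dist_triangle _ _ _
      linarith [hl1, hWl]
    have up := hsd32 k₁ hk₁
    have e2 : (2:ℝ)^(-s) = 2*(2:ℝ)^(-s-1) := by
      rw [zpow_sub₀ (two_ne_zero : (2:ℝ) ≠ 0), zpow_one]
      ring
    rw [e2]
    nlinarith [mul_nonneg (sub_nonneg.mpr hJ1') hδpos.le]
  have hdiaml_ub : Metric.diam (cube (d+1) (c l) (r l)) ≤ 128*J*δ := le_trans hl2 hsb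
  -- distance between centers
  have hD : ∀ k ∈ A, dist (c k) (c k₁) ≤ 196*J*δ := by
    intro k hk
    have hQkne : (cube (d+1) (c k) (r k)).Nonempty := ⟨c k, mem_cube_self _ (hrpos k).le⟩
    have hdiamk := (hkfacts k hk.1).2.2.2.1
    obtain ⟨x, hx, y, hy, hxy⟩ := exists_dist_lt_of_sDist_lt hQl_ne hQkne
      (show sDist _ _ < 32*J*δ + δ by linarith [hsd32 k hk])
    obtain ⟨x₁, hx₁, z₁, hz₁, hxz₁⟩ := exists_dist_lt_of_sDist_lt hQl_ne hQk₁ne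
      (show sDist _ _ < 32*J*δ + δ by linarith [hsd32 k₁ hk₁])
    have d1 : dist (c k) y ≤ δ :=
      le_trans (dist_le_diam_of_mem (isBounded_cube _ (hrpos k).le)
        (mem_cube_self _ (hrpos k).le) hy) hdiamk
    have d2 : dist x x₁ ≤ 128*J*δ :=
      le_trans (dist_le_diam_of_mem (isBounded_cube _ (hrpos l).le) hx hx₁) hdiaml_ub
    have d3 : dist z₁ (c k₁) ≤ δ :=
      le_trans (dist_le_diam_of_mem (isBounded_cube _ (hrpos k₁).le)
        hz₁ (mem_cube_self _ (hrpos k₁).le)) hdiamk₁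
    have t : dist (c k) (c k₁) ≤
        dist (c k) y + dist y x + dist x x₁ + dist x₁ z₁ + dist z₁ (c k₁) := by
      calc dist (c k) (c k₁) ≤ dist (c k) z₁ + dist z₁ (c k₁) := dist_triangle _ _ _
        _ ≤ (dist (c k) x₁ + dist x₁ z₁) + dist z₁ (c k₁) := by
            linarith [dist_triangle (c k) x₁ z₁]
        _ ≤ ((dist (c k) x + dist x x₁) + dist x₁ z₁) + dist z₁ (c k₁) := by
            linarith [dist_triangle (c k) x x₁]
        _ ≤ (((dist (c k) y + dist y x) + dist x x₁) + dist x₁ z₁) + dist z₁ (c k₁) := by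
            linarith [dist_triangle (c k) y x]
    have hyx : dist y x = dist x y := dist_comm _ _
    rw [hyx] at t
    nlinarith [mul_nonneg (sub_nonneg.mpr hJ1') hδpos.le]
  by_cases hj : j = 0
  -- CASE j = 0 : plain volume bound
  · subst hj
    have hJeq : J = 1 := by rw [hJdef]; norm_num
    have hcount := count_by_volume (n := d+1) A c r
      (a := δ/(4*((d:ℝ)+1))) (by positivity)
      (fun k hk => (hkfacts k hk.1).1)
      (fun k hk k' hk' hne => eq_empty_of_subset_empty ((hdisjW k k' hne) ▸
        inter_subset_inter (obox_subset_interior_cube _ _) (obox_subset_interior_cube _ _)))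
      (S := cube (d+1) (c k₁) (197*δ))
      (hS := by
        intro k hk x hx i
        have h1 : |x i - c k i| < r k := hx i
        have h2 : |c k i - c k₁ i| ≤ dist (c k) (c k₁) := coord_dist_le _ _ i
        have h3 := hD k hk
        rw [hJeq] at h3
        have h4 := (hkfacts k hk.1).2.1
        have habs : |x i - c k₁ i| ≤ |x i - c k i| + |c k i - c k₁ i| := by
          have := abs_sub_le (x i) (c k i) (c k₁ i)
          linarith
        linarith)
      (V := (2*(197*δ))^(d+1)) (by positivity)
      (le_of_eq (volume_cube _ (by positivity)))
    refine ⟨hcount.1, le_trans hcount.2 ?_⟩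
    rw [hpow2]
    have hratio : (2*(197*δ))^(d+1) / (2*(δ/(4*((d:ℝ)+1))))^(d+1)
        = (788*((d:ℝ)+1))^(d+1) := by
      rw [← div_pow]
      congr 1
      field_simp
      ring
    rw [hratio]
    have hp20 : ((2:ℝ)^20) = 1048576 := by norm_num
    have hsq : (d:ℝ)+1 ≤ ((d:ℝ)+1)^2 := by nlinarith
    have hbase : (788*((d:ℝ)+1)) ≤ (2:ℝ)^20*((d:ℝ)+1)^2*(1+K) := by
      rw [hp20]
      nlinarith [mul_nonneg (mul_nonneg (by norm_num : (0:ℝ) ≤ (1048576:ℝ))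
        (sq_nonneg ((d:ℝ)+1))) hK]
    have hb1 : (1:ℝ) ≤ (2:ℝ)^20*((d:ℝ)+1)^2*(1+K) := by
      rw [hp20]
      nlinarith [mul_nonneg (mul_nonneg (by norm_num : (0:ℝ) ≤ (1048576:ℝ))
        (sq_nonneg ((d:ℝ)+1))) hK]
    calc (788*((d:ℝ)+1))^(d+1)
        ≤ ((2:ℝ)^20*((d:ℝ)+1)^2*(1+K))^(d+1) :=
          pow_le_pow_left₀ (by positivity) hbase _
      _ ≤ ((2:ℝ)^20*((d:ℝ)+1)^2*(1+K))^(2*(d+1)) :=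
          pow_le_pow_right₀ hb1 (by omega)
      _ ≤ ((2:ℝ)^20*((d:ℝ)+1)^2*(1+K))^(2*(d+1)) * ((2:ℝ)^(0:ℕ))^d := by
          norm_num
  -- CASE j ≥ 1 : graph slab bound
  · have hlow : 16*J*δ < sDist (cube (d+1) (c l) (r l)) (cube (d+1) (c k₁) (r k₁)) := by
      have hif := hk₁.2.2
      rw [if_neg hj] at hif
      have e : (2:ℝ)^(-s₀+(j:ℤ)+4) = 16*J*δ := by
        rw [show -s₀+(j:ℤ)+4 = -s₀ + ((j:ℤ)+4) by ring, hzp,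
          zpow_add₀ (two_ne_zero : (2:ℝ) ≠ 0), zpow_natCast, ← hJdef,
          show ((2:ℝ)^(4:ℤ)) = 16 by norm_num]
        ring
      rw [e] at hif
      exact hif.1
    have hck₁4 : ‖c k₁‖ < 1/4 :=
      mem_ball_zero_iff.mp (((hkfacts k₁ hk₁.1).2.2.1) (mem_cube_self _ (hrpos k₁).le)).2
    have hhalf : sDist (cube (d+1) (c l) (r l)) (cube (d+1) (c k₁) (r k₁)) < 1/2 := by
      have h := sDist_le_dist (mem_cube_self (c l) (hrpos l).le) (mem_cube_self (c k₁) (hrpos k₁).le)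
      have h2 : dist (c l) (c k₁) ≤ ‖c l‖ + ‖c k₁‖ := by
        rw [dist_eq_norm]
        exact (norm_sub_le _ _)
      linarith
    have hJδ : J*δ < 1/32 := by nlinarith
    have hδ32 : δ < 1/32 := by nlinarith
    set R := 196*J*δ with hRdef
    have hRpos : 0 < R := by positivity
    set N := ⌈((d:ℝ)+1)*196*J⌉₊ with hNdef
    have hNpos : 0 < N := Nat.ceil_pos.mpr (by positivity)
    have hNpos' : (0:ℝ) < N := by exact_mod_cast hNpos
    have hNge : ((d:ℝ)+1)*196*J ≤ N := Nat.le_ceil _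
    have hNle : (N:ℝ) ≤ 392*((d:ℝ)+1)*J := by
      have h := Nat.ceil_lt_add_one (show (0:ℝ) ≤ ((d:ℝ)+1)*196*J by positivity)
      have h196 : (1:ℝ) ≤ ((d:ℝ)+1)*196*J := by nlinarith
      rw [← hNdef] at h
      nlinarith
    have hRN : R/(N:ℝ) ≤ δ/((d:ℝ)+1) := by
      rw [div_le_div_iff₀ hNpos' (by positivity)]
      calc R*((d:ℝ)+1) = δ*(((d:ℝ)+1)*196*J) := by rw [hRdef]; ring
        _ ≤ δ*N := by nlinarith
    have hRNδ : R/(N:ℝ) ≤ δ := le_trans hRN (by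
      rw [div_le_iff₀ (by positivity)]
      nlinarith)
    set ρ := (7+7*K)*δ with hρdef
    have hρ7 : 7*δ ≤ ρ := by nlinarith
    set g : (Fin d → Fin N) → EuclideanSpace ℝ (Fin d) :=
      fun v => WithLp.toLp 2 (fun i => c k₁ i.castSucc - R + (2*((v i : ℕ):ℝ)+1)*(R/(N:ℝ))) with hgdef
    set G : (Fin d → Fin N) → EuclideanSpace ℝ (Fin (d+1)) :=
      fun v => WithLp.toLp 2 (fun i => Fin.lastCases (φ (g v)) (fun i' => g v i') i) with hGdef
    have hGcast : ∀ v (i' : Fin d), G v i'.castSucc = g v i' := by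
      intro v i'
      simp only [hGdef]
      exact Fin.lastCases_castSucc i'
    have hGlast : ∀ v, G v (Fin.last d) = φ (g v) := by
      intro v
      simp only [hGdef]
      exact Fin.lastCases_last
    have hSsub : ∀ k ∈ A, obox (d+1) (c k) (r k) ⊆ ⋃ v : Fin d → Fin N, cube (d+1) (G v) ρ := by
      intro k hk x hx
      obtain ⟨hrlb, hrub, hsub, hdiamk, y, hyfr, hyd⟩ := hkfacts k hk.1
      have hck : ‖c k‖ < 1/4 := mem_ball_zero_iff.mp (hsub (mem_cube_self _ (hrpos k).le)).2
      have hgrid : ∀ i : Fin d, ∃ u : Fin N,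
          |c k i.castSucc - (c k₁ i.castSucc - R + (2*((u:ℕ):ℝ)+1)*(R/(N:ℝ)))| ≤ R/(N:ℝ) := by
        intro i
        exact grid_1d hRpos hNpos ((coord_dist_le (c k) (c k₁) i.castSucc).trans (hD k hk))
      choose v hv using hgrid
      have hgv : ∀ i : Fin d, |g v i - c k i.castSucc| ≤ R/(N:ℝ) := by
        intro i
        have := hv i
        rw [abs_sub_comm]
        simpa [hgdef] using this
      -- norm facts about y
      have hynorm : ‖y‖ < 1/2 := by
        have h1 : ‖y‖ - ‖c k‖ ≤ ‖y - c k‖ := norm_sub_norm_le _ _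
        have h2 : ‖y - c k‖ = dist (c k) y := by rw [dist_comm, dist_eq_norm]
        linarith
      have hyball : y ∈ ball (0 : EuclideanSpace ℝ (Fin (d+1))) 1 :=
        mem_ball_zero_iff.mpr (by linarith)
      have hyfrΩ : y ∈ frontier Ω :=
        mem_frontier_of_frontier_inter_open hyfr hyball isOpen_ball
      have hylast : y (Fin.last d) = φ (eproj y) := by
        have hmem : y ∈ {x : EuclideanSpace ℝ (Fin (d + 1)) |
            x (Fin.last d) = φ (WithLp.toLp 2 (fun i : Fin d => x i.castSucc))} ∩ ball 0 1 := by
          rw [← hLip.2.2.2]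
          exact ⟨hyfrΩ, hyball⟩
        exact hmem.1
      -- g v is close to the horizontal projection of c k
      have hgck : dist (g v) (eproj (c k)) ≤ δ := by
        have h1 : dist (g v) (eproj (c k)) ≤ (d:ℝ) * (R/(N:ℝ)) :=
          euclid_dist_le (by positivity) hgv
        have h2 : (d:ℝ) * (R/(N:ℝ)) ≤ (d:ℝ) * (δ/((d:ℝ)+1)) :=
          mul_le_mul_of_nonneg_left hRN (Nat.cast_nonneg d)
        have h3 : (d:ℝ) * (δ/((d:ℝ)+1)) ≤ δ := by
          rw [mul_div_assoc']
          rw [div_le_iff₀ (by positivity)]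
          nlinarith [Nat.cast_nonneg (α := ℝ) d]
        linarith
      have hgnorm : ‖g v‖ < 1 := by
        have h1 : ‖g v‖ - ‖eproj (c k)‖ ≤ ‖g v - eproj (c k)‖ := norm_sub_norm_le _ _
        have h2 : ‖g v - eproj (c k)‖ = dist (g v) (eproj (c k)) := by rw [dist_eq_norm]
        have h3 : ‖eproj (c k)‖ ≤ ‖c k‖ := proj_norm_le _
        linarith
      have hgball : g v ∈ ball (0 : EuclideanSpace ℝ (Fin d)) 1 := mem_ball_zero_iff.mpr hgnorm
      have hyproj : ‖eproj y‖ < 1 := lt_of_le_of_lt (proj_norm_le _) (by linarith)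
      have hypball : eproj y ∈ ball (0 : EuclideanSpace ℝ (Fin d)) 1 := mem_ball_zero_iff.mpr hyproj
      have hdyg : dist (eproj y) (g v) ≤ 7*δ := by
        have h1 : dist (eproj y) (eproj (c k)) ≤ dist y (c k) := proj_dist_le _ _
        have h2 : dist y (c k) = dist (c k) y := dist_comm _ _
        calc dist (eproj y) (g v) ≤ dist (eproj y) (eproj (c k)) + dist (eproj (c k)) (g v) :=
              dist_triangle _ _ _
          _ ≤ 7*δ := by
              have := dist_comm (eproj (c k)) (g v)
              linarith [hgck, dist_comm (g v) (eproj (c k)) ▸ hgck]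
      have hφbound : |φ (eproj y) - φ (g v)| ≤ K * (7*δ) := by
        have := hLip.2.1 (eproj y) hypball (g v) hgball
        calc |φ (eproj y) - φ (g v)| ≤ K * dist (eproj y) (g v) := this
          _ ≤ K * (7*δ) := mul_le_mul_of_nonneg_left hdyg hK
      refine mem_iUnion.mpr ⟨v, ?_⟩
      intro i
      refine Fin.lastCases ?_ (fun i' => ?_) i
      · -- last coordinate
        rw [hGlast]
        have h1 : |x (Fin.last d) - c k (Fin.last d)| < r k := hx (Fin.last d)
        have h2 : |c k (Fin.last d) - y (Fin.last d)| ≤ dist (c k) y :=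
          coord_dist_le _ _ _
        have h3 : |y (Fin.last d) - φ (g v)| = |φ (eproj y) - φ (g v)| := by rw [hylast]
        have h4 : |x (Fin.last d) - φ (g v)| ≤
            |x (Fin.last d) - c k (Fin.last d)| + |c k (Fin.last d) - y (Fin.last d)|
              + |y (Fin.last d) - φ (g v)| := by
          have t1 := abs_sub_le (x (Fin.last d)) (c k (Fin.last d)) (φ (g v))
          have t2 := abs_sub_le (c k (Fin.last d)) (y (Fin.last d)) (φ (g v))
          linarith
        rw [h3] at h4
        have : |x (Fin.last d) - φ (g v)| ≤ r k + 6*δ + K*(7*δ) := by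
          linarith [hφbound]
        rw [hρdef]
        nlinarith
      · -- horizontal coordinates
        rw [hGcast]
        have h1 : |x i'.castSucc - c k i'.castSucc| < r k := hx i'.castSucc
        have h2 : |c k i'.castSucc - g v i'| ≤ R/(N:ℝ) := by
          have := hgv i'
          rwa [abs_sub_comm] at this
        have h4 : |x i'.castSucc - g v i'| ≤
            |x i'.castSucc - c k i'.castSucc| + |c k i'.castSucc - g v i'| := by
          have := abs_sub_le (x i'.castSucc) (c k i'.castSucc) (g v i')
          linarith
        rw [hρdef]
        nlinarith
    have hvolS : volume (⋃ v : Fin d → Fin N, cube (d+1) (G v) ρ) ≤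
        ENNReal.ofReal ((N:ℝ)^d * (2*ρ)^(d+1)) := by
      have hρpos : (0:ℝ) ≤ ρ := by positivity
      calc volume (⋃ v : Fin d → Fin N, cube (d+1) (G v) ρ)
          ≤ ∑ v : Fin d → Fin N, volume (cube (d+1) (G v) ρ) :=
            measure_iUnion_fintype_le volume _
        _ = ∑ _v : Fin d → Fin N, ENNReal.ofReal ((2*ρ)^(d+1)) :=
            Finset.sum_congr rfl fun v _ => volume_cube _ hρpos
        _ = (Fintype.card (Fin d → Fin N)) * ENNReal.ofReal ((2*ρ)^(d+1)) := by
            rw [Finset.sum_const, nsmul_eq_mul, Finset.card_univ]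
        _ = ENNReal.ofReal ((N:ℝ)^d * (2*ρ)^(d+1)) := by
            rw [ENNReal.ofReal_mul (by positivity)]
            congr 1
            rw [show ((N:ℝ)^d) = ((N^d : ℕ) : ℝ) by push_cast; ring, ENNReal.ofReal_natCast]
            congr 1
            simp [Fintype.card_fun]
    have hcount := count_by_volume (n := d+1) A c r
      (a := δ/(4*((d:ℝ)+1))) (by positivity)
      (fun k hk => (hkfacts k hk.1).1)
      (fun k hk k' hk' hne => eq_empty_of_subset_empty ((hdisjW k k' hne) ▸
        inter_subset_inter (obox_subset_interior_cube _ _) (obox_subset_interior_cube _ _)))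
      (S := ⋃ v : Fin d → Fin N, cube (d+1) (G v) ρ)
      hSsub
      (V := (N:ℝ)^d * (2*ρ)^(d+1)) (by positivity)
      hvolS
    refine ⟨hcount.1, le_trans hcount.2 ?_⟩
    rw [hpow2, ← hJdef]
    have hratio : ((N:ℝ)^d * (2*ρ)^(d+1)) / (2*(δ/(4*((d:ℝ)+1))))^(d+1)
        = (N:ℝ)^d * (28*((d:ℝ)+1)*(1+K))^(d+1) := by
      rw [mul_div_assoc, ← div_pow]
      congr 2
      rw [hρdef]
      field_simp
      ring
    rw [hratio]
    have hN' : (N:ℝ)^d ≤ (392*((d:ℝ)+1))^d * J^d := by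
      rw [← mul_pow]
      exact pow_le_pow_left₀ (Nat.cast_nonneg N) (by nlinarith) d
    have hp20 : ((2:ℝ)^20) = 1048576 := by norm_num
    have hsq : (d:ℝ)+1 ≤ ((d:ℝ)+1)^2 := by nlinarith
    have hb2 : (1:ℝ) ≤ 392*((d:ℝ)+1) := by nlinarith
    have hbase : 392*((d:ℝ)+1) * (28*((d:ℝ)+1)*(1+K)) ≤ (2:ℝ)^20*((d:ℝ)+1)^2*(1+K) := by
      rw [hp20]
      nlinarith [mul_nonneg (sq_nonneg ((d:ℝ)+1)) hK]
    have hb1 : (1:ℝ) ≤ (2:ℝ)^20*((d:ℝ)+1)^2*(1+K) := by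
      rw [hp20]
      nlinarith [mul_nonneg (mul_nonneg (by norm_num : (0:ℝ) ≤ (1048576:ℝ))
        (sq_nonneg ((d:ℝ)+1))) hK]
    have hconst : (392*((d:ℝ)+1))^d * (28*((d:ℝ)+1)*(1+K))^(d+1) ≤
        ((2:ℝ)^20*((d:ℝ)+1)^2*(1+K))^(2*(d+1)) := by
      calc (392*((d:ℝ)+1))^d * (28*((d:ℝ)+1)*(1+K))^(d+1)
          ≤ (392*((d:ℝ)+1))^(d+1) * (28*((d:ℝ)+1)*(1+K))^(d+1) := by
            apply mul_le_mul_of_nonneg_right (pow_le_pow_right₀ hb2 (by omega)) (by positivity)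
        _ = (392*((d:ℝ)+1) * (28*((d:ℝ)+1)*(1+K)))^(d+1) := (mul_pow _ _ _).symm
        _ ≤ ((2:ℝ)^20*((d:ℝ)+1)^2*(1+K))^(d+1) :=
            pow_le_pow_left₀ (by positivity) hbase _
        _ ≤ ((2:ℝ)^20*((d:ℝ)+1)^2*(1+K))^(2*(d+1)) :=
            pow_le_pow_right₀ hb1 (by omega)
    calc (N:ℝ)^d * (28*((d:ℝ)+1)*(1+K))^(d+1)
        ≤ ((392*((d:ℝ)+1))^d * J^d) * (28*((d:ℝ)+1)*(1+K))^(d+1) :=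
          mul_le_mul_of_nonneg_right hN' (by positivity)
      _ = ((392*((d:ℝ)+1))^d * (28*((d:ℝ)+1)*(1+K))^(d+1)) * J^d := by ring
      _ ≤ ((2:ℝ)^20*((d:ℝ)+1)^2*(1+K))^(2*(d+1)) * J^d :=
          mul_le_mul_of_nonneg_right hconst (by positivity)
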